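/- Let S ⊆ T be rings (S a subring of T, not necessarily unital in T) and a ∈ S with aⁿ = aⁿ⁺¹x for some n ≥ 1 and x ∈ S. If T is a Dedekind-finite exchange ring, then a is strongly π-regular in S. -/
import Mathlib

private lemma aux_pow_succ_mem {T : Type*} [Ring T] (S : NonUnitalSubring T)
    {a : T} (ha : a ∈ S) : ∀ m : ℕ, a ^ (m + 1) ∈ S := by
  intro m
  induction m with
  | zero => simpa using ha
  | succ m ih => rw [pow_succ]; exact S.mul_mem ih ha

private lemma aux_mul_pow_mem {T : Type*} [Ring T] (S : NonUnitalSubring T)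
    {b a : T} (hb : b ∈ S) (ha : a ∈ S) : ∀ m : ℕ, b * a ^ m ∈ S := by
  intro m
  induction m with
  | zero => simpa using hb
  | succ m ih => rw [pow_succ, ← mul_assoc]; exact S.mul_mem ih ha

/-- If `S` is a (not necessarily unital) subring of a Dedekind-finite exchange
ring `T` and `a ∈ S` satisfies `a^n = a^(n+1) * x` with `x ∈ S`, then `a` is
strongly π-regular in `S`. -/
theorem stmt_19 {T : Type*} [Ring T] (S : NonUnitalSubring T)
    (hdf : ∀ a b : T, a * b = 1 → b * a = 1)
    (hex : ∀ t : T, ∃ e : T, IsIdempotentElem e ∧ (∃ r : T, e = t * r) ∧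
      ∃ s : T, 1 - e = (1 - t) * s)
    (a x : T) (ha : a ∈ S) (hx : x ∈ S) (n : ℕ) (hn : 0 < n)
    (h : a ^ n = a ^ (n + 1) * x) :
    ∃ (k : ℕ) (u v : T), 0 < k ∧ u ∈ S ∧ v ∈ S ∧
      a ^ k = a ^ (k + 1) * u ∧ a ^ k = v * a ^ (k + 1) := by
  -- Step 1 : `a^n = a^(n+m) * x^m` for all `m`.
  have key : ∀ m : ℕ, a ^ n = a ^ (n + m) * x ^ m := by
    intro m
    induction m with
    | zero => simp
    | succ m ih =>
      have step : a ^ (n + m) = a ^ (n + m + 1) * x := by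
        calc a ^ (n + m) = a ^ m * a ^ n := by rw [← pow_add]; congr 1; omega
          _ = a ^ m * (a ^ (n + 1) * x) := by rw [← h]
          _ = a ^ (n + m + 1) * x := by rw [← mul_assoc, ← pow_add]; congr 2; omega
      calc a ^ n = a ^ (n + m) * x ^ m := ih
        _ = (a ^ (n + m + 1) * x) * x ^ m := by rw [← step]
        _ = a ^ (n + m + 1) * (x * x ^ m) := mul_assoc _ _ _
        _ = a ^ (n + m + 1) * x ^ (m + 1) := by rw [← pow_succ']
        _ = a ^ (n + (m + 1)) * x ^ (m + 1) := rfl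
  -- the element to which we apply exchange
  have hat : a ^ n * (a ^ n * x ^ n) = a ^ n := by
    rw [← mul_assoc, ← pow_add]
    exact (key n).symm
  obtain ⟨e, he, ⟨r, her⟩, ⟨s, hes⟩⟩ := hex (a ^ n * x ^ n)
  have hee : e * e = e := he
  -- `a^n * e = a^n`
  have hae : a ^ n * e = a ^ n := by
    have h0 : a ^ n * (1 - e) = 0 := by
      rw [hes, ← mul_assoc, mul_sub, mul_one, hat, sub_self, zero_mul]
    rw [mul_sub, mul_one] at h0
    exact (sub_eq_zero.mp h0).symm
  -- an auxiliary element `c` with `a^n * c = e`, `e * c = c`, `c * e = c`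
  obtain ⟨c, hac, hec, hce⟩ :
      ∃ c : T, a ^ n * c = e ∧ e * c = c ∧ c * e = c := by
    refine ⟨e * (x ^ n * r) * e, ?_, ?_, ?_⟩
    · calc a ^ n * (e * (x ^ n * r) * e) = ((a ^ n * e) * (x ^ n * r)) * e := by
            simp only [mul_assoc]
        _ = ((a ^ n * x ^ n) * r) * e := by rw [hae]; simp only [mul_assoc]
        _ = e * e := by rw [← her]
        _ = e := hee
    · calc e * (e * (x ^ n * r) * e) = (e * e) * (x ^ n * r) * e := by
            simp only [mul_assoc]
        _ = e * (x ^ n * r) * e := by rw [hee]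
    · calc (e * (x ^ n * r) * e) * e = e * (x ^ n * r) * (e * e) := by
            simp only [mul_assoc]
        _ = e * (x ^ n * r) * e := by rw [hee]
  -- Dedekind-finiteness step
  have e1 : e * (1 - e + c) = c := by
    rw [mul_add, mul_sub, mul_one, hee, sub_self, zero_add, hec]
  have he0 : (1 - e) * (1 - e) = 1 - e := by
    rw [sub_mul, one_mul, mul_sub, mul_one, hee]
    abel
  have huv : (1 - e + a ^ n) * (1 - e + c) = 1 := by
    have e2 : a ^ n * (1 - e + c) = e := by
      rw [mul_add, mul_sub, mul_one, hae, sub_self, zero_add, hac]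
    have e0 : (1 - e) * (1 - e + c) = (1 - e + c) - c := by
      rw [sub_mul, one_mul, e1]
    calc (1 - e + a ^ n) * (1 - e + c)
        = (1 - e) * (1 - e + c) + a ^ n * (1 - e + c) := add_mul _ _ _
      _ = ((1 - e + c) - c) + e := by rw [e0, e2]
      _ = 1 := by abel
  have hvu : (1 - e + c) * (1 - e + a ^ n) = 1 := hdf _ _ huv
  -- extract `c * a^n = e`
  have hca : c * a ^ n = e := by
    have h1 : e * ((1 - e + c) * (1 - e + a ^ n)) = e := by rw [hvu, mul_one]
    rw [← mul_assoc, e1, mul_add, mul_sub, mul_one, hce, sub_self, zero_add] at h1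
    exact h1
  -- extract `e * a^n = a^n`
  have hea : e * a ^ n = a ^ n := by
    have h1 : (1 - e) * ((1 - e + c) * (1 - e + a ^ n)) = 1 - e := by
      rw [hvu, mul_one]
    have h2 : (1 - e) * (1 - e + c) = 1 - e := by
      have hc0 : (1 - e) * c = 0 := by
        rw [sub_mul, one_mul, hec, sub_self]
      rw [mul_add, hc0, add_zero, he0]
    rw [← mul_assoc, h2, mul_add, he0] at h1
    -- h1 : (1 - e) + (1 - e) * a ^ n = 1 - e
    have h3 : (1 - e) * a ^ n = 0 := add_eq_left.mp h1
    rw [sub_mul, one_mul] at h3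
    exact (sub_eq_zero.mp h3).symm
  -- identify `e` and `c` as elements built from `a` and `x`
  have het : e = a ^ n * x ^ n := by
    calc e = c * a ^ n := hca.symm
      _ = c * (a ^ n * (a ^ n * x ^ n)) := by rw [hat]
      _ = (c * a ^ n) * (a ^ n * x ^ n) := (mul_assoc c (a ^ n) _).symm
      _ = e * (a ^ n * x ^ n) := by rw [hca]
      _ = (e * a ^ n) * x ^ n := (mul_assoc e (a ^ n) _).symm
      _ = a ^ n * x ^ n := by rw [hea]
  have hcS : c = (a ^ n * x ^ n) * x ^ n := by
    calc c = c * e := hce.symm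
      _ = c * (a ^ n * x ^ n) := by rw [het]
      _ = (c * a ^ n) * x ^ n := (mul_assoc c (a ^ n) _).symm
      _ = e * x ^ n := by rw [hca]
      _ = (a ^ n * x ^ n) * x ^ n := by rw [het]
  -- final witnesses
  refine ⟨n, x, c * a ^ (n - 1), hn, hx, ?_, h, ?_⟩
  · -- membership of v
    rw [hcS]
    obtain ⟨m, rfl⟩ : ∃ m, n = m + 1 := ⟨n - 1, by omega⟩
    exact aux_mul_pow_mem S
      (S.mul_mem (S.mul_mem (aux_pow_succ_mem S ha m) (aux_pow_succ_mem S hx m))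
        (aux_pow_succ_mem S hx m)) ha _
  · -- left equation
    calc a ^ n = e * a ^ n := hea.symm
      _ = (c * a ^ n) * a ^ n := by rw [hca]
      _ = c * (a ^ n * a ^ n) := mul_assoc c _ _
      _ = c * a ^ (n + n) := by rw [← pow_add]
      _ = c * (a ^ (n - 1) * a ^ (n + 1)) := by rw [← pow_add]; congr 2; omega
      _ = (c * a ^ (n - 1)) * a ^ (n + 1) := (mul_assoc c _ _).symm
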